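/- Let w(X₂, p₂) = ∫_{x̲(X₂,p₂)}^{x̄(X₂,p₂)} (λX₂ + (1−λ)x − c_A) dx + ∫_{x̄(X₂,p₂)}^{1} (x − c_H) dx, where on the region X₂ ∈ [max(0, X_A(p₂)), min(1, X_H(p₂))] one has x̄ = x_HA(X₂,p₂) with ∂x_HA/∂X₂ = λφ/(1−(1−λ)φ) ∈ (0,1) and x̲ = x_AO(X₂,p₂) with ∂x_AO/∂X₂ = −λ/(1−λ). Then on this region ∂²w/∂X₂² > 0, i.e., w is strictly convex in X₂. -/

import Mathlib

open intervalIntegral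

lemma lin_int (u v C k : ℝ) :
    (∫ x in u..v, (C + k * x)) = C * (v - u) + k * (v ^ 2 - u ^ 2) / 2 := by
  have hi : IntervalIntegrable (fun x : ℝ => k * x) MeasureTheory.volume u v :=
    (continuous_const.mul continuous_id').intervalIntegrable u v
  rw [intervalIntegral.integral_add intervalIntegrable_const hi,
      intervalIntegral.integral_const, intervalIntegral.integral_const_mul,
      integral_id]
  simp only [smul_eq_mul]
  ring

lemma quad_sc (s : Set ℝ) (hs : Convex ℝ s) (a b c : ℝ) (ha : 0 < a) :
    StrictConvexOn ℝ s (fun x => a * x ^ 2 + b * x + c) := by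
  refine ⟨hs, ?_⟩
  intro x _ y _ hxy pp qq hpp hqq hpq
  simp only [smul_eq_mul]
  have h2 : 0 < (x - y) ^ 2 := by
    have : x - y ≠ 0 := sub_ne_zero.mpr hxy
    positivity
  have hq1 : qq = 1 - pp := by linarith
  have hd : pp * (a * x ^ 2 + b * x + c) + qq * (a * y ^ 2 + b * y + c)
      - (a * (pp * x + qq * y) ^ 2 + b * (pp * x + qq * y) + c)
      = a * (pp * qq * (x - y) ^ 2) := by rw [hq1]; ring
  have hpos : 0 < a * (pp * qq * (x - y) ^ 2) :=
    mul_pos ha (mul_pos (mul_pos hpp hqq) h2)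
  linarith

/-- Period-2 social welfare is strictly convex in model quality on the
interior regime. -/
theorem welfare_convex_in_quality
    (β lam φ cA cH p : ℝ)
    (hβ : β ∈ Set.Ioo (0:ℝ) 1) (hlam : lam ∈ Set.Ioo (0:ℝ) 1)
    (hφ : φ ∈ Set.Ioo (0:ℝ) 1) (hden : 0 < 1 - (1 - lam) * φ)
    (hcA : 0 < cA) (hc : cA < cH) (hcβ : cH < β) (hp : 0 ≤ p)
    (xHA xAO : ℝ → ℝ) (XA XH : ℝ) (w : ℝ → ℝ)
    (hxHA : ∀ X, xHA X = (lam * φ * β * X + cH - cA - p) / ((1 - (1 - lam) * φ) * β))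
    (hxAO : ∀ X, xAO X = (cA + p - lam * φ * β * X) / ((1 - lam) * φ * β))
    (hXA : XA = (cA + p - (1 - lam) * φ * cH) / (lam * φ * β))
    (hXH : XH = (cA + p + (1 - (1 - lam) * φ) * β - cH) / (lam * φ * β))
    (hlt : max 0 XA < min 1 XH)
    (hinterior : ∀ X ∈ Set.Icc (max 0 XA) (min 1 XH),
      0 < xAO X ∧ xAO X < xHA X ∧ xHA X < 1)
    (hw : ∀ X, w X = (∫ x in (xAO X)..(xHA X), (lam * X + (1 - lam) * x - cA)) +
      ∫ x in (xHA X)..1, (x - cH)) :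
    StrictConvexOn ℝ (Set.Icc (max 0 XA) (min 1 XH)) w := by
  obtain ⟨hβ0, hβ1⟩ := hβ
  obtain ⟨hlam0, hlam1⟩ := hlam
  obtain ⟨hφ0, hφ1⟩ := hφ
  have h1lam : 0 < 1 - lam := by linarith
  set D1 : ℝ := (1 - (1 - lam) * φ) * β with hD1
  set D2 : ℝ := (1 - lam) * φ * β with hD2
  have hD1pos : 0 < D1 := mul_pos hden hβ0
  have hD2pos : 0 < D2 := mul_pos (mul_pos h1lam hφ0) hβ0
  set A1 : ℝ := lam * φ * β / D1 with hA1
  set B1 : ℝ := (cH - cA - p) / D1 with hB1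
  set A2 : ℝ := -(lam * φ * β / D2) with hA2
  set B2 : ℝ := (cA + p) / D2 with hB2
  have hv : ∀ X, xHA X = A1 * X + B1 := by
    intro X; rw [hxHA X, hA1, hB1]; ring
  have hu : ∀ X, xAO X = A2 * X + B2 := by
    intro X; rw [hxAO X, hA2, hB2]; ring
  set a : ℝ := lam * (A1 - A2) + (1 - lam) * (A1 ^ 2 - A2 ^ 2) / 2 - A1 ^ 2 / 2 with ha
  set b : ℝ := lam * (B1 - B2) - cA * (A1 - A2)
      + (1 - lam) * (A1 * B1 - A2 * B2) + cH * A1 - A1 * B1 with hb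
  set c : ℝ := -cA * (B1 - B2) + (1 - lam) * (B1 ^ 2 - B2 ^ 2) / 2
      - cH * (1 - B1) + (1 - B1 ^ 2) / 2 with hc'
  have hwq : w = fun X => a * X ^ 2 + b * X + c := by
    funext X
    have e1 : (∫ x in (xAO X)..(xHA X), (lam * X + (1 - lam) * x - cA))
        = (lam * X - cA) * (xHA X - xAO X)
          + (1 - lam) * ((xHA X) ^ 2 - (xAO X) ^ 2) / 2 := by
      rw [← lin_int (xAO X) (xHA X) (lam * X - cA) (1 - lam)]
      apply intervalIntegral.integral_congr
      intro x _; ring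
    have e2 : (∫ x in (xHA X)..1, (x - cH))
        = (-cH) * (1 - xHA X) + 1 * (1 ^ 2 - (xHA X) ^ 2) / 2 := by
      rw [← lin_int (xHA X) 1 (-cH) 1]
      apply intervalIntegral.integral_congr
      intro x _; ring
    rw [hw X, e1, e2, hv X, hu X, ha, hb, hc']
    ring
  have hA1v : A1 = lam * φ / (1 - (1 - lam) * φ) := by
    rw [hA1, hD1]; field_simp
  have hA2v : A2 = -(lam / (1 - lam)) := by
    rw [hA2, hD2]
    field_simp
  have hA1pos : 0 < A1 := by
    rw [hA1v]; positivity
  have hA1lt : A1 < 1 := by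
    rw [hA1v]
    rw [div_lt_one hden]
    nlinarith
  have hapos : 0 < a := by
    have haeq : a = (lam * A1 * (2 - A1) + lam ^ 2 / (1 - lam)) / 2 := by
      rw [ha, hA2v]
      field_simp
      ring
    have h1 : 0 < lam * A1 * (2 - A1) :=
      mul_pos (mul_pos hlam0 hA1pos) (by linarith)
    have h2 : 0 < lam ^ 2 / (1 - lam) := div_pos (pow_pos hlam0 2) h1lam
    rw [haeq]; linarith
  rw [hwq]
  exact quad_sc _ (convex_Icc _ _) a b c hapos
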